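/- Let p ≥ 1, let Γ = diag(γ₁, …, γ_p) and L = diag(l₁, …, l_p) be real diagonal p × p matrices with γ₁ ≥ γ₂ ≥ … ≥ γ_p > 0 and l₁ > l₂ > … > l_p > 0. Then the minimum of H ↦ trace(Γ⁻¹ · H · L · Hᵀ) over the orthogonal group O(p) is attained at H = I, i.e. trace(Γ⁻¹ · L) is a least element of the set {trace(Γ⁻¹ · H · L · Hᵀ) : H orthogonal}. -/

import Mathlib

open Matrix

private lemma key_ineq (p : ℕ) (a l : Fin p → ℝ) (ha : Monotone a)
    (hsl : StrictAnti l) (D : Matrix (Fin p) (Fin p) ℝ)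
    (hD : D ∈ doublyStochastic ℝ (Fin p)) :
    ∑ i, a i * l i ≤ ∑ i, ∑ j, a i * l j * D i j := by
  obtain ⟨w, hw0, hw1, hwD⟩ := exists_eq_sum_perm_of_mem_doublyStochastic hD
  have hav : Antivary a l := by
    intro i j hij
    exact ha (le_of_lt (hsl.lt_iff_gt.mp hij))
  have hperm : ∀ σ : Equiv.Perm (Fin p),
      ∑ i, ∑ j, a i * l j * (σ.permMatrix ℝ) i j = ∑ i, a i * l (σ i) := by
    intro σ
    refine Finset.sum_congr rfl fun i _ => ?_
    rw [Finset.sum_eq_single (σ i)]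
    · simp [Equiv.Perm.permMatrix, PEquiv.toMatrix_apply, Equiv.toPEquiv_apply]
    · intro b _ hb
      simp [Equiv.Perm.permMatrix, PEquiv.toMatrix_apply, Equiv.toPEquiv_apply, hb.symm]
    · simp
  have hDij : ∀ i j, D i j = ∑ σ : Equiv.Perm (Fin p), w σ * (σ.permMatrix ℝ) i j := by
    intro i j
    rw [← hwD]
    simp only [Matrix.sum_apply, Matrix.smul_apply, smul_eq_mul]
  calc ∑ i, a i * l i = ∑ σ : Equiv.Perm (Fin p), w σ * ∑ i, a i * l i := by
        rw [← Finset.sum_mul, hw1, one_mul]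
    _ ≤ ∑ σ : Equiv.Perm (Fin p), w σ * ∑ i, a i * l (σ i) := by
        refine Finset.sum_le_sum fun σ _ => ?_
        exact mul_le_mul_of_nonneg_left (hav.sum_mul_le_sum_mul_comp_perm) (hw0 σ)
    _ = ∑ σ : Equiv.Perm (Fin p), ∑ i, ∑ j, w σ * (a i * l j * (σ.permMatrix ℝ) i j) := by
        simp only [← hperm, Finset.mul_sum]
    _ = ∑ i, ∑ j, ∑ σ : Equiv.Perm (Fin p), w σ * (a i * l j * (σ.permMatrix ℝ) i j) := by
        rw [Finset.sum_comm]
        refine Finset.sum_congr rfl fun i _ => ?_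
        rw [Finset.sum_comm]
    _ = ∑ i, ∑ j, a i * l j * D i j := by
        refine Finset.sum_congr rfl fun i _ => Finset.sum_congr rfl fun j _ => ?_
        rw [hDij, Finset.mul_sum]
        refine Finset.sum_congr rfl fun σ _ => ?_
        ring

/-- The minimum of `H ↦ trace (Γ⁻¹ * H * L * Hᵀ)` over the orthogonal group is
attained at `H = 1`, i.e. `trace (Γ⁻¹ * L)` is a least element of the set of
values of this map over orthogonal matrices. -/
theorem isLeast_trace_inv_conj_orthogonal
    (p : ℕ) (hp : 1 ≤ p) (γ l : Fin p → ℝ)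
    (hγ : Antitone γ) (hγpos : ∀ i, 0 < γ i)
    (hl : StrictAnti l) (hlpos : ∀ i, 0 < l i) :
    IsLeast
      {x : ℝ | ∃ H : Matrix (Fin p) (Fin p) ℝ, H * Hᵀ = 1 ∧
        x = Matrix.trace ((Matrix.diagonal γ)⁻¹ * H * Matrix.diagonal l * Hᵀ)}
      (Matrix.trace ((Matrix.diagonal γ)⁻¹ * Matrix.diagonal l)) := by
  have hγne : ∀ i, γ i ≠ 0 := fun i => (hγpos i).ne'
  set a : Fin p → ℝ := fun i => (γ i)⁻¹ with ha_def
  have hinv : (Matrix.diagonal γ)⁻¹ = Matrix.diagonal a := by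
    apply Matrix.inv_eq_right_inv
    have h1 : (fun i => γ i * a i) = fun _ : Fin p => (1 : ℝ) :=
      funext fun i => mul_inv_cancel₀ (hγne i)
    rw [Matrix.diagonal_mul_diagonal, h1, Matrix.diagonal_one]
  have ha : Monotone a := fun i j hij =>
    inv_anti₀ (hγpos j) (hγ hij)
  constructor
  · exact ⟨1, by simp, by simp⟩
  · rintro x ⟨H, hH, rfl⟩
    have hH' : Hᵀ * H = 1 := mul_eq_one_comm.mp hH
    have htr : Matrix.trace ((Matrix.diagonal γ)⁻¹ * H * Matrix.diagonal l * Hᵀ)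
        = ∑ i, ∑ j, a i * l j * ((H i j) ^ 2) := by
      rw [hinv, Matrix.trace]
      refine Finset.sum_congr rfl fun i _ => ?_
      rw [Matrix.diag_apply, Matrix.mul_apply]
      refine Finset.sum_congr rfl fun j _ => ?_
      rw [Matrix.mul_diagonal, Matrix.diagonal_mul, Matrix.transpose_apply]
      ring
    have htr1 : Matrix.trace ((Matrix.diagonal γ)⁻¹ * Matrix.diagonal l)
        = ∑ i, a i * l i := by
      rw [hinv, Matrix.diagonal_mul_diagonal, Matrix.trace_diagonal]
    rw [htr, htr1]
    set D : Matrix (Fin p) (Fin p) ℝ := fun i j => (H i j) ^ 2 with hD_def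
    have hD : D ∈ doublyStochastic ℝ (Fin p) := by
      rw [mem_doublyStochastic_iff_sum]
      refine ⟨fun i j => sq_nonneg _, fun i => ?_, fun j => ?_⟩
      · have := congrArg (fun M => M i i) hH
        simpa [hD_def, Matrix.mul_apply, sq, Matrix.one_apply] using this
      · have := congrArg (fun M => M j j) hH'
        simpa [hD_def, Matrix.mul_apply, sq, Matrix.one_apply] using this
    exact key_ineq p a l ha hl D hD
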